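/- For a bounded lattice L, the poset of nonempty filters of L ordered by reverse inclusion is a complete lattice, and it is isomorphic (as a complete lattice) to the lattice of closed filters of the dual L-space of L via the map p ↦ {x : p ⊆ x}. -/

import Mathlib

/-- A filter of a meet-semilattice: an upward-closed subset closed under binary
meets. -/
def IsFilt {X : Type*} [SemilatticeInf X] (s : Set X) : Prop :=
  (∀ x y : X, x ∈ s → x ≤ y → y ∈ s) ∧ ∀ x y : X, x ∈ s → y ∈ s → x ⊓ y ∈ s

variable (L : Type*) [Lattice L] [BoundedOrder L]

/-- The nonempty filters of `L`, to be ordered by reverse inclusion (the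
filter completion of `L`). -/
def FL : Type _ := {p : Set L // IsFilt p ∧ p.Nonempty}

/-- Reverse inclusion order on nonempty filters. -/
instance : PartialOrder (FL L) where
  le p q := q.1 ⊆ p.1
  le_refl p := subset_rfl
  le_trans p q r h1 h2 := Set.Subset.trans h2 h1
  le_antisymm p q h1 h2 := Subtype.ext (subset_antisymm h2 h1)

/-- The points of the dual L-space of `L`: its proper nonempty filters. -/
def Pt : Type _ := {x : Set L // IsFilt x ∧ x.Nonempty ∧ ⊥ ∉ x}

/-- The basic sets `θ a = {x : a ∈ x}`. -/
def theta (a : L) : Set (Pt L) := {x : Pt L | a ∈ x.1}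

/-- The Stone-type topology on the dual space of `L`. -/
def ptTop : TopologicalSpace (Pt L) :=
  TopologicalSpace.generateFrom
    ({s | ∃ a : L, s = theta L a} ∪ {s | ∃ a : L, s = (theta L a)ᶜ})

/-- A filter of the dual space (points ordered by inclusion, meets given by
intersections). -/
def IsFiltPt (F : Set (Pt L)) : Prop :=
  (∀ x y : Pt L, x ∈ F → x.1 ⊆ y.1 → y ∈ F) ∧
  (∀ x y : Pt L, x ∈ F → y ∈ F → ∀ z : Pt L, z.1 = x.1 ∩ y.1 → z ∈ F)

/- ------------------- auxiliary lemmas ------------------- -/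

lemma FL.le_def (p q : FL L) : p ≤ q ↔ q.1 ⊆ p.1 := Iff.rfl

lemma fl_top_mem (p : FL L) : (⊤ : L) ∈ p.1 := by
  obtain ⟨⟨hup, _⟩, ⟨x, hx⟩⟩ := p.2
  exact hup x ⊤ hx le_top

lemma pt_top_mem (x : Pt L) : (⊤ : L) ∈ x.1 := by
  obtain ⟨⟨hup, _⟩, ⟨a, ha⟩, _⟩ := x.2
  exact hup a ⊤ ha le_top

/-- Intersection of two points is a point. -/
def interPt (x y : Pt L) : Pt L :=
  ⟨x.1 ∩ y.1,
    ⟨fun a b hab hle => ⟨x.2.1.1 a b hab.1 hle, y.2.1.1 a b hab.2 hle⟩,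
     fun a b ha hb => ⟨x.2.1.2 a b ha.1 hb.1, y.2.1.2 a b ha.2 hb.2⟩⟩,
    ⟨⊤, pt_top_mem L x, pt_top_mem L y⟩,
    fun h => x.2.2.2 h.1⟩

def fset (p : FL L) : Set (Pt L) := {x : Pt L | p.1 ⊆ x.1}

lemma fset_filt (p : FL L) : IsFiltPt L (fset L p) := by
  constructor
  · intro x y hx hxy
    exact hx.trans hxy
  · intro x y hx hy z hz
    intro a ha
    rw [hz]
    exact ⟨hx ha, hy ha⟩

lemma theta_closed (a : L) : @IsClosed _ (ptTop L) (theta L a) := by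
  letI := ptTop L
  exact ⟨TopologicalSpace.GenerateOpen.basic _ (Or.inr ⟨a, rfl⟩)⟩

lemma fset_closed (p : FL L) : @IsClosed _ (ptTop L) (fset L p) := by
  have h : fset L p = ⋂ a ∈ p.1, theta L a := by
    ext x
    constructor
    · intro hx
      exact Set.mem_iInter₂.mpr fun a ha => hx ha
    · intro hx a ha
      exact Set.mem_iInter₂.mp hx a ha
  rw [h]
  exact @isClosed_biInter _ _ (ptTop L) _ _ fun a _ => theta_closed L a

lemma fset_antitone (p q : FL L) (h : fset L p ⊆ fset L q) : q.1 ⊆ p.1 := by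
  by_cases hb : (⊥ : L) ∈ p.1
  · intro a _
    exact p.2.1.1 ⊥ a hb bot_le
  · have hp : (⟨p.1, p.2.1, p.2.2, hb⟩ : Pt L) ∈ fset L p := fun a ha => ha
    exact h hp

lemma fset_mono (p q : FL L) (h : q.1 ⊆ p.1) : fset L p ⊆ fset L q :=
  fun _ hx => h.trans hx

lemma fset_surj (c : Set (Pt L)) (hf : IsFiltPt L c) (hc : @IsClosed _ (ptTop L) c) :
    ∃ p : FL L, fset L p = c := by
  rcases Set.eq_empty_or_nonempty c with h0 | ⟨z₀, hz₀⟩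
  · refine ⟨⟨Set.univ, ⟨fun _ _ _ _ => trivial, fun _ _ _ _ => trivial⟩, ⟨⊤, trivial⟩⟩, ?_⟩
    rw [h0]
    ext x
    simp only [fset, Set.mem_setOf_eq, Set.mem_empty_iff_false, iff_false]
    intro hsub
    exact x.2.2.2 (hsub (Set.mem_univ (⊥ : L)))
  · -- the intersection of all points of c
    set T : Set L := {a | ∀ z ∈ c, a ∈ z.1} with hT
    have hTfilt : IsFilt T := by
      constructor
      · intro a b ha hab z hz
        exact z.2.1.1 a b (ha z hz) hab
      · intro a b ha hb z hz
        exact z.2.1.2 a b (ha z hz) (hb z hz)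
    have hTne : T.Nonempty := ⟨⊤, fun z _ => pt_top_mem L z⟩
    have hTprop : (⊥ : L) ∉ T := fun h => z₀.2.2.2 (h z₀ hz₀)
    set pt : Pt L := ⟨T, hTfilt, hTne, hTprop⟩ with hpt
    -- key step : pt ∈ c
    have hptc : pt ∈ c := by
      by_contra hne
      letI := ptTop L
      have hb :=
        TopologicalSpace.isTopologicalBasis_of_subbasis
          (rfl : ptTop L = TopologicalSpace.generateFrom
            ({s | ∃ a : L, s = theta L a} ∪ {s | ∃ a : L, s = (theta L a)ᶜ}))
      obtain ⟨U, hU, hxU, hUc⟩ :=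
        hb.exists_subset_of_mem_open (show pt ∈ cᶜ from hne) hc.isOpen_compl
      obtain ⟨f, ⟨hfin, hfB⟩, rfl⟩ := hU
      have hA : ∀ s ∈ f, ∃ w, w ∈ c ∧ ∀ z', z' ∈ c → z'.1 ⊆ w.1 → z' ∈ s := by
        intro s hs
        rcases hfB hs with ⟨a, rfl⟩ | ⟨a, rfl⟩
        · have ha : a ∈ T := hxU _ hs
          exact ⟨z₀, hz₀, fun z' hz' _ => ha z' hz'⟩
        · have ha : pt ∈ (theta L a)ᶜ := hxU _ hs
          have ha' : ¬ ∀ z ∈ c, a ∈ z.1 := ha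
          push_neg at ha'
          obtain ⟨w, hwc, hwa⟩ := ha'
          exact ⟨w, hwc, fun z' _ hzw hz' => hwa (hzw hz')⟩
      have hB : ∀ g : Set (Set (Pt L)), g.Finite →
          (∀ s ∈ g, ∃ w, w ∈ c ∧ ∀ z', z' ∈ c → z'.1 ⊆ w.1 → z' ∈ s) →
          ∃ z, z ∈ c ∧ ∀ z', z' ∈ c → z'.1 ⊆ z.1 → ∀ s ∈ g, z' ∈ s := by
        intro g hg
        refine Set.Finite.induction_on g hg ?_ ?_
        · exact fun _ => ⟨z₀, hz₀, fun z' _ _ s hs => absurd hs (Set.notMem_empty s)⟩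
        · intro s g hns hfin ih hyp
          obtain ⟨z, hzc, hz⟩ := ih fun s hs => hyp s (Set.mem_insert_of_mem _ hs)
          obtain ⟨w, hwc, hw⟩ := hyp _ (Set.mem_insert _ _)
          refine ⟨interPt L z w, hf.2 z w hzc hwc _ rfl, ?_⟩
          intro z' hz'c hsub t ht
          rcases Set.mem_insert_iff.mp ht with rfl | ht
          · exact hw z' hz'c (hsub.trans Set.inter_subset_right)
          · exact hz z' hz'c (hsub.trans Set.inter_subset_left) t ht
      obtain ⟨z, hzc, hz⟩ := hB f hfin hA
      exact hUc (show z ∈ ⋂₀ f from fun s hs => hz z hzc subset_rfl s hs) hzc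
    refine ⟨⟨T, hTfilt, hTne⟩, ?_⟩
    ext x
    constructor
    · intro hx
      exact hf.1 pt x hptc hx
    · intro hx a ha
      exact ha x hx

/-- The poset of nonempty filters of a bounded lattice `L` under reverse
inclusion is a complete lattice, and the map `p ↦ {x : p ⊆ x}` is an order
isomorphism (hence an isomorphism of complete lattices) onto the lattice of
closed filters of the dual L-space of `L`. -/
theorem filter_completion_iso_closed_filters :
    (∀ S : Set (FL L), ∃ m : FL L, IsGLB S m) ∧
    (∀ S : Set (FL L), ∃ m : FL L, IsLUB S m) ∧
    ∃ e : FL L ≃ {c : Set (Pt L) // IsFiltPt L c ∧ @IsClosed _ (ptTop L) c},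
      (∀ p : FL L, (e p).1 = {x : Pt L | p.1 ⊆ x.1}) ∧
      (∀ p q : FL L, p ≤ q ↔ (e p).1 ⊆ (e q).1) := by
  refine ⟨?_, ?_, ?_⟩
  · -- infima
    intro S
    refine ⟨⟨{a | ∀ t : Set L, IsFilt t → (⊤ : L) ∈ t → (∀ p ∈ S, p.1 ⊆ t) → a ∈ t},
      ⟨?_, ?_⟩, ⟨⊤, fun t _ h2 _ => h2⟩⟩, ?_, ?_⟩
    · intro x y hx hxy t h1 h2 h3
      exact h1.1 x y (hx t h1 h2 h3) hxy
    · intro x y hx hy t h1 h2 h3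
      exact h1.2 x y (hx t h1 h2 h3) (hy t h1 h2 h3)
    · intro p hp
      show p.1 ⊆ _
      intro a ha t _ _ h3
      exact h3 p hp ha
    · intro n hn
      show _ ⊆ n.1
      intro a ha
      exact ha n.1 n.2.1 (fl_top_mem L n) fun p hp => hn hp
  · -- suprema
    intro S
    refine ⟨⟨{a | ∀ p ∈ S, a ∈ p.1},
      ⟨fun x y hx hxy p hp => p.2.1.1 x y (hx p hp) hxy,
       fun x y hx hy p hp => p.2.1.2 x y (hx p hp) (hy p hp)⟩,
      ⟨⊤, fun p _ => fl_top_mem L p⟩⟩, ?_, ?_⟩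
    · intro p hp
      show _ ⊆ p.1
      exact fun a ha => ha p hp
    · intro n hn
      show n.1 ⊆ _
      exact fun a ha p hp => hn hp ha
  · -- the isomorphism
    have hbij : Function.Bijective
        (fun p : FL L =>
          (⟨fset L p, fset_filt L p, fset_closed L p⟩ :
            {c : Set (Pt L) // IsFiltPt L c ∧ @IsClosed _ (ptTop L) c})) := by
      constructor
      · intro p q h
        have h' : fset L p = fset L q := congrArg Subtype.val h
        exact le_antisymm (show q.1 ⊆ p.1 from fset_antitone L p q h'.le)
          (show p.1 ⊆ q.1 from fset_antitone L q p h'.ge)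
      · rintro ⟨c, hcf, hcc⟩
        obtain ⟨p, hp⟩ := fset_surj L c hcf hcc
        exact ⟨p, Subtype.ext hp⟩
    refine ⟨Equiv.ofBijective _ hbij, fun p => rfl, fun p q => ?_⟩
    constructor
    · intro h
      exact fset_mono L p q h
    · intro h
      exact fset_antitone L p q h
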